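/- Let f, g : ℝ → ℝ be continuous functions of exponential order, vanishing on (-∞,0), and let (f*g)(t) = ∫₀^t f(t-τ)g(τ) dτ. Then for a, h > 0 sufficiently large, the Shehu transform of f*g equals the product of the Shehu transforms: H(f*g)(a,h) = H(f)(a,h) · H(g)(a,h). -/
import Mathlib


open MeasureTheory Real Set
open scoped Convolution

lemma exp_mul_integrable_aux (φ : ℝ → ℝ) (M c s : ℝ) (hc : Continuous φ)
    (h0 : ∀ t < (0:ℝ), φ t = 0) (hb : ∀ t ≥ (0:ℝ), |φ t| ≤ M * Real.exp (c * t))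
    (hs : c < s) : Integrable (fun t => Real.exp (-(s * t)) * φ t) := by
  have hFc : Continuous fun t => Real.exp (-(s * t)) * φ t :=
    (Real.continuous_exp.comp (continuous_const.mul continuous_id).neg).mul hc
  have h1 : IntegrableOn (fun t => Real.exp (-(s*t)) * φ t) (Iic 0) := by
    rw [integrableOn_Iic_iff_integrableOn_Iio]
    have hEq : EqOn (fun t => Real.exp (-(s*t)) * φ t) 0 (Iio 0) := fun t ht => by
      simp [h0 t ht]
    exact (integrableOn_congr_fun hEq measurableSet_Iio).mpr integrableOn_zero
  have h2 : IntegrableOn (fun t => Real.exp (-(s*t)) * φ t) (Ioi 0) := by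
    have hint : IntegrableOn (fun t => M * Real.exp (-(s - c) * t)) (Ioi 0) :=
      (exp_neg_integrableOn_Ioi 0 (by linarith)).const_mul M
    refine Integrable.mono' hint hFc.aestronglyMeasurable.restrict ?_
    filter_upwards [ae_restrict_mem measurableSet_Ioi] with t ht
    have hbt := hb t ht.le
    have e1 : Real.exp (-(s*t)) * Real.exp (c*t) = Real.exp (-(s-c)*t) := by
      rw [← Real.exp_add]; congr 1; ring
    calc ‖Real.exp (-(s*t)) * φ t‖ = Real.exp (-(s*t)) * |φ t| := by
          rw [norm_mul, Real.norm_eq_abs, Real.norm_eq_abs, abs_of_pos (Real.exp_pos _)]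
      _ ≤ Real.exp (-(s*t)) * (M * Real.exp (c*t)) :=
          mul_le_mul_of_nonneg_left hbt (Real.exp_pos _).le
      _ = M * (Real.exp (-(s*t)) * Real.exp (c*t)) := by ring
      _ = M * Real.exp (-(s-c)*t) := by rw [e1]
  have h3 := h1.union h2
  rwa [Iic_union_Ioi, integrableOn_univ] at h3

theorem shehu_convolution
    (f g : ℝ → ℝ) (Mf Mg c : ℝ)
    (hfc : Continuous f) (hgc : Continuous g)
    (hf0 : ∀ t < (0:ℝ), f t = 0) (hg0 : ∀ t < (0:ℝ), g t = 0)
    (hfb : ∀ t ≥ (0:ℝ), |f t| ≤ Mf * Real.exp (c * t))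
    (hgb : ∀ t ≥ (0:ℝ), |g t| ≤ Mg * Real.exp (c * t))
    (a h : ℝ) (ha : 0 < a) (hh : 0 < h) (hgt : c < a / h) :
    (∫ t in Ioi (0:ℝ),
        Real.exp (-(a * t) / h) * ∫ τ in (0:ℝ)..t, f (t - τ) * g τ) =
      (∫ t in Ioi (0:ℝ), Real.exp (-(a * t) / h) * f t) *
        (∫ t in Ioi (0:ℝ), Real.exp (-(a * t) / h) * g t) := by
  set s : ℝ := a / h with hs
  have hexp : ∀ t : ℝ, -(a * t) / h = -(s * t) := fun t => by rw [hs]; ring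
  simp only [hexp]
  set F : ℝ → ℝ := fun t => Real.exp (-(s * t)) * f t with hFdef
  set G : ℝ → ℝ := fun t => Real.exp (-(s * t)) * g t with hGdef
  have hF : Integrable F := exp_mul_integrable_aux f Mf c s hfc hf0 hfb hgt
  have hG : Integrable G := exp_mul_integrable_aux g Mg c s hgc hg0 hgb hgt
  set L : ℝ →L[ℝ] ℝ →L[ℝ] ℝ := ContinuousLinearMap.mul ℝ ℝ with hL
  -- RHS pieces equal full integrals
  have hFzero : ∀ x : ℝ, x < 0 → F x = 0 := fun x hx => by simp [hFdef, hf0 x hx]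
  have hGzero : ∀ x : ℝ, x < 0 → G x = 0 := fun x hx => by simp [hGdef, hg0 x hx]
  have hRF : (∫ t in Ioi (0:ℝ), F t) = ∫ t, F t := by
    rw [← integral_Ici_eq_integral_Ioi]
    exact setIntegral_eq_integral_of_forall_compl_eq_zero
      (fun x hx => hFzero x (lt_of_not_ge hx))
  have hRG : (∫ t in Ioi (0:ℝ), G t) = ∫ t, G t := by
    rw [← integral_Ici_eq_integral_Ioi]
    exact setIntegral_eq_integral_of_forall_compl_eq_zero
      (fun x hx => hGzero x (lt_of_not_ge hx))
  -- pointwise identity on Ioi 0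
  have hpt : ∀ t ∈ Ioi (0:ℝ),
      Real.exp (-(s * t)) * (∫ τ in (0:ℝ)..t, f (t - τ) * g τ) = (F ⋆[L] G) t := by
    intro t ht
    rw [mem_Ioi] at ht
    have refl1 : (∫ τ in (0:ℝ)..t, f (t - τ) * g τ)
        = ∫ τ in (0:ℝ)..t, f τ * g (t - τ) := by
      have h2 := intervalIntegral.integral_comp_sub_left
        (a := (0:ℝ)) (b := t) (fun τ => f τ * g (t - τ)) t
      simp only [sub_self, sub_zero] at h2
      rw [← h2]
      apply intervalIntegral.integral_congr
      intro x _
      simp [sub_sub_cancel]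
    have key : ∀ τ : ℝ, F τ * G (t - τ)
        = Real.exp (-(s * t)) * (f τ * g (t - τ)) := by
      intro τ
      have e1 : Real.exp (-(s*τ)) * Real.exp (-(s*(t-τ))) = Real.exp (-(s*t)) := by
        rw [← Real.exp_add]; congr 1; ring
      calc F τ * G (t - τ)
          = (Real.exp (-(s*τ)) * Real.exp (-(s*(t-τ)))) * (f τ * g (t - τ)) := by
            simp only [hFdef, hGdef]; ring
        _ = Real.exp (-(s*t)) * (f τ * g (t - τ)) := by rw [e1]
    have hconv : (F ⋆[L] G) t = ∫ τ, F τ * G (t - τ) := by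
      simp only [convolution_def, hL, ContinuousLinearMap.mul_apply']
    have hcompl : ∀ τ : ℝ, τ ∉ Icc (0:ℝ) t → F τ * G (t - τ) = 0 := by
      intro τ hτ
      rcases lt_or_ge τ 0 with h1 | h1
      · rw [hFzero τ h1, zero_mul]
      · have : t < τ := by
          by_contra hle
          exact hτ ⟨h1, not_lt.mp hle⟩
        rw [hGzero (t - τ) (by linarith), mul_zero]
    rw [hconv, ← setIntegral_eq_integral_of_forall_compl_eq_zero hcompl,
      integral_Icc_eq_integral_Ioc, ← intervalIntegral.integral_of_le ht.le]
    rw [refl1, intervalIntegral.integral_congr (fun x _ => key x),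
      intervalIntegral.integral_const_mul]
  -- convolution vanishes on non-positives
  have hconvzero : ∀ t : ℝ, t ∉ Ioi (0:ℝ) → (F ⋆[L] G) t = 0 := by
    intro t ht
    rw [mem_Ioi, not_lt] at ht
    have hconv : (F ⋆[L] G) t = ∫ τ, F τ * G (t - τ) := by
      simp only [convolution_def, hL, ContinuousLinearMap.mul_apply']
    rw [hconv]
    have hae : ∀ᵐ τ : ℝ, F τ * G (t - τ) = 0 := by
      have hne : ∀ᵐ τ : ℝ, τ ≠ (0:ℝ) := by
        refine ae_iff.mpr ?_
        simp only [ne_eq, not_not, setOf_eq_eq_singleton]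
        exact Real.volume_singleton
      filter_upwards [hne] with τ hτ
      rcases lt_or_ge τ 0 with h1 | h1
      · rw [hFzero τ h1, zero_mul]
      · have h2 : 0 < τ := lt_of_le_of_ne h1 (Ne.symm hτ)
        rw [hGzero (t - τ) (by linarith), mul_zero]
    exact integral_eq_zero_of_ae hae
  calc (∫ t in Ioi (0:ℝ),
        Real.exp (-(s * t)) * ∫ τ in (0:ℝ)..t, f (t - τ) * g τ)
      = ∫ t in Ioi (0:ℝ), (F ⋆[L] G) t := setIntegral_congr_fun measurableSet_Ioi hpt
    _ = ∫ t, (F ⋆[L] G) t := setIntegral_eq_integral_of_forall_compl_eq_zero hconvzero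
    _ = L (∫ t, F t) (∫ t, G t) := integral_convolution L hF hG
    _ = (∫ t, F t) * (∫ t, G t) := by rw [hL, ContinuousLinearMap.mul_apply']
    _ = (∫ t in Ioi (0:ℝ), F t) * (∫ t in Ioi (0:ℝ), G t) := by rw [hRF, hRG]
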